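/- A semilinear automorphism S of a complex Hilbert space H of dimension ≥ 3 that maps every pair of orthogonal vectors to orthogonal vectors is a nonzero scalar multiple of a unitary or anti-unitary operator. -/

import Mathlib

/-- A semilinear automorphism `S` of a complex Hilbert space of dimension `≥ 3` that
sends orthogonal vectors to orthogonal vectors is a nonzero scalar multiple of a
unitary or anti-unitary operator. -/
theorem stmt_14 {H : Type*} [NormedAddCommGroup H] [InnerProductSpace ℂ H]
    [CompleteSpace H] (hdim : 3 ≤ Module.rank ℂ H)
    (S : H → H) (hbij : Function.Bijective S)
    (hadd : ∀ x y : H, S (x + y) = S x + S y)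
    (α : ℂ ≃+* ℂ) (hsmul : ∀ (a : ℂ) (x : H), S (a • x) = α a • S x)
    (horth : ∀ x y : H, (inner ℂ x y : ℂ) = 0 → (inner ℂ (S x) (S y) : ℂ) = 0) :
    ∃ c : ℂ, c ≠ 0 ∧
      ((∃ U : H ≃ₗᵢ[ℂ] H, ∀ x, S x = c • U x) ∨
       (∃ U : H ≃ₛₗᵢ[(starRingEnd ℂ)] H, ∀ x, S x = c • U x)) := by
  classical
  have hinj := hbij.1
  have S0 : S 0 = 0 := by
    have h := hadd 0 0
    rw [add_zero] at h
    exact (left_eq_add.mp h)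
  have Sneg : ∀ x : H, S (-x) = -S x := by
    intro x
    have h := hadd x (-x)
    rw [add_neg_cancel, S0] at h
    exact eq_neg_of_add_eq_zero_right h.symm
  have Ssub : ∀ x y : H, S (x - y) = S x - S y := by
    intro x y
    rw [sub_eq_add_neg, hadd, Sneg, sub_eq_add_neg]
  have Snz : ∀ x : H, x ≠ 0 → S x ≠ 0 := by
    intro x hx h
    exact hx (hinj (h.trans S0.symm))
  have hns : ∀ w : H, (inner ℂ w w : ℂ) = ((‖w‖ : ℝ) : ℂ) ^ 2 := by
    intro w
    rw [inner_self_eq_norm_sq_to_K]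
    norm_cast
  -- existence of a unit vector orthogonal to two given vectors
  have hperp : ∀ x y : H, ∃ z : H, ‖z‖ = 1 ∧ (inner ℂ x z : ℂ) = 0 ∧ (inner ℂ y z : ℂ) = 0 := by
    intro x y
    set K : Submodule ℂ H := Submodule.span ℂ {x, y} with hK
    haveI hfin : FiniteDimensional ℂ K := FiniteDimensional.span_of_finite ℂ (Set.toFinite _)
    haveI : CompleteSpace K := FiniteDimensional.complete ℂ K
    have hKne : Kᗮ ≠ ⊥ := by
      intro hbot
      have htop : K = ⊤ := Submodule.orthogonal_eq_bot_iff.mp hbot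
      have h1 : Module.rank ℂ K ≤ 2 := by
        refine (rank_span_le _).trans ?_
        refine (Cardinal.mk_insert_le).trans ?_
        rw [Cardinal.mk_singleton]
        norm_num
      rw [htop, rank_top] at h1
      have : (3 : Cardinal) ≤ 2 := hdim.trans h1
      norm_num at this
    obtain ⟨z', hz'mem, hz'ne⟩ := Submodule.ne_bot_iff _ |>.mp hKne
    have hzx : (inner ℂ x z' : ℂ) = 0 :=
      (Submodule.mem_orthogonal K z').mp hz'mem x (Submodule.subset_span (by simp))
    have hzy : (inner ℂ y z' : ℂ) = 0 :=
      (Submodule.mem_orthogonal K z').mp hz'mem y (Submodule.subset_span (by simp))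
    have hz'norm : ‖z'‖ ≠ 0 := norm_ne_zero_iff.mpr hz'ne
    refine ⟨((‖z'‖⁻¹ : ℝ) : ℂ) • z', ?_, ?_, ?_⟩
    · rw [norm_smul]
      simp [abs_norm, inv_mul_cancel₀ hz'norm]
    · rw [inner_smul_right, hzx, mul_zero]
    · rw [inner_smul_right, hzy, mul_zero]
  -- equal norms on orthogonal unit vectors
  have hpair : ∀ x y : H, ‖x‖ = 1 → ‖y‖ = 1 → (inner ℂ x y : ℂ) = 0 → ‖S x‖ = ‖S y‖ := by
    intro x y hx hy hxy
    have hyx : (inner ℂ y x : ℂ) = 0 := by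
      rw [← inner_conj_symm, hxy, map_zero]
    have h1 : (inner ℂ (S x) (S y) : ℂ) = 0 := horth _ _ hxy
    have h2 : (inner ℂ (S y) (S x) : ℂ) = 0 := horth _ _ hyx
    have h3 : (inner ℂ (x + y) (x - y) : ℂ) = 0 := by
      simp only [inner_add_left, inner_sub_right]
      rw [hxy, hyx, hns, hns, hx, hy]
      norm_num
    have h4 := horth _ _ h3
    rw [hadd, Ssub] at h4
    simp only [inner_add_left, inner_sub_right] at h4
    rw [h1, h2, hns, hns] at h4
    have h6 : ‖S x‖ ^ 2 = ‖S y‖ ^ 2 := by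
      have h5 : ((‖S x‖ : ℝ) : ℂ) ^ 2 = ((‖S y‖ : ℝ) : ℂ) ^ 2 := by linear_combination h4
      exact_mod_cast h5
    nlinarith [norm_nonneg (S x), norm_nonneg (S y)]
  -- a unit vector
  obtain ⟨e, hen⟩ : ∃ u : H, ‖u‖ = 1 := by
    have hnt : ∃ v : H, v ≠ 0 := by
      rw [← rank_pos_iff_exists_ne_zero (R := ℂ)]
      exact lt_of_lt_of_le (by norm_num) hdim
    obtain ⟨v, hv⟩ := hnt
    have hvn : ‖v‖ ≠ 0 := norm_ne_zero_iff.mpr hv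
    refine ⟨((‖v‖⁻¹ : ℝ) : ℂ) • v, ?_⟩
    rw [norm_smul]
    simp [abs_norm, inv_mul_cancel₀ hvn]
  have hene : e ≠ 0 := by
    intro h; rw [h] at hen; simp at hen
  have hSe0 : ((‖S e‖ : ℝ) : ℂ) ^ 2 ≠ 0 := by
    have h := norm_ne_zero_iff.mpr (Snz e hene)
    exact pow_ne_zero 2 (by exact_mod_cast h)
  -- α commutes with conjugation
  obtain ⟨f, hfn, hef, -⟩ := hperp e e
  have hfe : (inner ℂ f e : ℂ) = 0 := by rw [← inner_conj_symm, hef, map_zero]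
  have hSef : (inner ℂ (S e) (S f) : ℂ) = 0 := horth _ _ hef
  have hSfe : (inner ℂ (S f) (S e) : ℂ) = 0 := horth _ _ hfe
  have hSnorm : ‖S e‖ = ‖S f‖ := hpair e f hen hfn hef
  have hconj : ∀ a : ℂ, α (starRingEnd ℂ a) = starRingEnd ℂ (α a) := by
    intro a
    have h0 : (inner ℂ (e + a • f) ((starRingEnd ℂ a) • e - f) : ℂ) = 0 := by
      simp only [inner_add_left, inner_sub_right, inner_smul_left, inner_smul_right]
      rw [hef, hfe, hns, hns, hen, hfn]
      push_cast
      ring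
    have h1 := horth _ _ h0
    rw [hadd, Ssub, hsmul, hsmul] at h1
    simp only [inner_add_left, inner_sub_right, inner_smul_left, inner_smul_right] at h1
    rw [hSef, hSfe, hns, hns, ← hSnorm] at h1
    have h2 : (α (starRingEnd ℂ a) - starRingEnd ℂ (α a)) * ((‖S e‖ : ℝ) : ℂ) ^ 2 = 0 := by
      linear_combination h1
    rcases mul_eq_zero.mp h2 with h | h
    · exact sub_eq_zero.mp h
    · exact absurd h hSe0
  -- α fixes the reals
  have hre : ∀ r : ℝ, α ((r : ℂ)) = (((α r).re : ℝ) : ℂ) := by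
    intro r
    have h1 : starRingEnd ℂ (α r) = α r := by
      rw [← hconj, Complex.conj_ofReal]
    exact (Complex.conj_eq_iff_re.mp h1).symm
  have hreal : ∀ r : ℝ, α ((r : ℂ)) = (r : ℂ) := by
    let β : ℝ →+* ℝ :=
      { toFun := fun r => (α r).re
        map_one' := by simp
        map_mul' := by
          intro r s
          have h := map_mul α (r : ℂ) (s : ℂ)
          rw [hre r, hre s] at h
          rw [show ((r : ℂ) * s) = ((r * s : ℝ) : ℂ) by push_cast; ring] at h
          rw [hre (r * s)] at h
          have := congrArg Complex.re h
          simpa using this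
        map_zero' := by simp
        map_add' := by
          intro r s
          have h := map_add α (r : ℂ) (s : ℂ)
          rw [hre r, hre s] at h
          rw [show ((r : ℂ) + s) = ((r + s : ℝ) : ℂ) by push_cast; ring] at h
          rw [hre (r + s)] at h
          have := congrArg Complex.re h
          simpa using this }
    intro r
    have hβ : β = RingHom.id ℝ := Subsingleton.elim _ _
    have hβr : (α r).re = r := by
      have := DFunLike.congr_fun hβ r
      exact this
    rw [hre r, hβr]
  -- α is the identity or conjugation
  have hAlg : ∀ (r : ℝ) (z : ℂ), α.toRingHom (r • z) = r • α.toRingHom z := by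
    intro r z
    simp only [RingEquiv.toRingHom_eq_coe, RingHom.coe_coe]
    rw [Complex.real_smul, map_mul, hreal, Complex.real_smul]
  have hcases : (∀ a : ℂ, α a = a) ∨ (∀ a : ℂ, α a = starRingEnd ℂ a) := by
    rcases Complex.real_algHom_eq_id_or_conj (AlgHom.mk' α.toRingHom hAlg) with h | h
    · left
      intro a
      simpa using DFunLike.congr_fun h a
    · right
      intro a
      simpa using DFunLike.congr_fun h a
  -- norm scaling
  have hcpos : 0 < ‖S e‖ := norm_pos_iff.mpr (Snz e hene)
  have hunit : ∀ x : H, ‖x‖ = 1 → ‖S x‖ = ‖S e‖ := by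
    intro x hx
    obtain ⟨z, hzn, hxz, hez⟩ := hperp x e
    rw [hpair x z hx hzn hxz]
    exact (hpair e z hen hzn hez).symm
  have hnorm : ∀ x : H, ‖S x‖ = ‖S e‖ * ‖x‖ := by
    intro x
    rcases eq_or_ne x 0 with rfl | hx
    · simp [S0]
    · have hxn : ‖x‖ ≠ 0 := norm_ne_zero_iff.mpr hx
      have hx1 : ‖((‖x‖⁻¹ : ℝ) : ℂ) • x‖ = 1 := by
        rw [norm_smul]; simp [abs_norm, inv_mul_cancel₀ hxn]
      have h1 : S x = ((‖x‖ : ℝ) : ℂ) • S (((‖x‖⁻¹ : ℝ) : ℂ) • x) := by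
        rw [← hreal ‖x‖, ← hsmul]
        congr 1
        rw [smul_smul]
        norm_cast
        rw [mul_inv_cancel₀ hxn, one_smul]
      rw [h1, norm_smul, hunit _ hx1]
      simp only [Complex.norm_real, Real.norm_eq_abs, abs_norm]
      ring
  have hcne : ((‖S e‖ : ℝ) : ℂ) ≠ 0 := by exact_mod_cast hcpos.ne'
  refine ⟨((‖S e‖ : ℝ) : ℂ), hcne, ?_⟩
  rcases hcases with hα | hα
  · left
    set F : H →ₗ[ℂ] H :=
      { toFun := fun x => (((‖S e‖ : ℝ) : ℂ))⁻¹ • S x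
        map_add' := by intro x y; rw [hadd, smul_add]
        map_smul' := by
          intro a x
          simp only [RingHom.id_apply]
          rw [hsmul, hα, smul_comm] } with hF
    have hFx : ∀ x, F x = (((‖S e‖ : ℝ) : ℂ))⁻¹ • S x := fun x => rfl
    have hFbij : Function.Bijective F := by
      constructor
      · intro x y h
        rw [hFx, hFx] at h
        exact hinj (smul_right_injective H (inv_ne_zero hcne) h)
      · intro y
        obtain ⟨x, hx⟩ := hbij.2 (((‖S e‖ : ℝ) : ℂ) • y)
        exact ⟨x, by rw [hFx, hx, smul_smul, inv_mul_cancel₀ hcne, one_smul]⟩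
    refine ⟨{ toLinearEquiv := LinearEquiv.ofBijective F hFbij,
              norm_map' := ?_ }, ?_⟩
    · intro x
      show ‖F x‖ = ‖x‖
      rw [hFx, norm_smul, hnorm x, norm_inv, Complex.norm_real, Real.norm_eq_abs, abs_norm]
      field_simp
    · intro x
      show S x = ((‖S e‖ : ℝ) : ℂ) • ((((‖S e‖ : ℝ) : ℂ))⁻¹ • S x)
      rw [smul_smul, mul_inv_cancel₀ hcne, one_smul]
  · right
    set F : H →ₛₗ[starRingEnd ℂ] H :=
      { toFun := fun x => (((‖S e‖ : ℝ) : ℂ))⁻¹ • S x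
        map_add' := by intro x y; rw [hadd, smul_add]
        map_smul' := by
          intro a x
          rw [hsmul, hα, smul_comm] } with hF
    have hFx : ∀ x, F x = (((‖S e‖ : ℝ) : ℂ))⁻¹ • S x := fun x => rfl
    have hFbij : Function.Bijective F := by
      constructor
      · intro x y h
        rw [hFx, hFx] at h
        exact hinj (smul_right_injective H (inv_ne_zero hcne) h)
      · intro y
        obtain ⟨x, hx⟩ := hbij.2 (((‖S e‖ : ℝ) : ℂ) • y)
        exact ⟨x, by rw [hFx, hx, smul_smul, inv_mul_cancel₀ hcne, one_smul]⟩
    refine ⟨{ toLinearEquiv := LinearEquiv.ofBijective F hFbij,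
              norm_map' := ?_ }, ?_⟩
    · intro x
      show ‖F x‖ = ‖x‖
      rw [hFx, norm_smul, hnorm x, norm_inv, Complex.norm_real, Real.norm_eq_abs, abs_norm]
      field_simp
    · intro x
      show S x = ((‖S e‖ : ℝ) : ℂ) • ((((‖S e‖ : ℝ) : ℂ))⁻¹ • S x)
      rw [smul_smul, mul_inv_cancel₀ hcne, one_smul]
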